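/- A one-dimensional Mori domain has finite character: every nonzero element belongs to only finitely many maximal ideals. -/

import Mathlib

/-- The image of an ideal of `A` in its fraction field, as an `A`-submodule. -/
noncomputable def idealImage {A : Type*} [CommRing A] (J : Ideal A) :
    Submodule A (FractionRing A) :=
  Submodule.map (Algebra.linearMap A (FractionRing A)) J

/-- An ideal `J` is divisorial: `J ≠ 0` and `J = (A : (A : J))`. -/
noncomputable def IsDivisorial {A : Type*} [CommRing A] (J : Ideal A) : Prop :=
  J ≠ ⊥ ∧ idealImage J = 1 / (1 / idealImage J)

/-- A Mori domain: every ascending chain of divisorial ideals stabilizes. -/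
noncomputable def IsMoriDomain (A : Type*) [CommRing A] : Prop :=
  ∀ f : ℕ → Ideal A, Monotone f → (∀ n, IsDivisorial (f n)) →
    ∃ N, ∀ n, N ≤ n → f n = f N

set_option linter.unusedSectionVars false

section Aux

variable {R : Type*} [CommRing R] [IsDomain R]

open Submodule

lemma finj : Function.Injective (algebraMap R (FractionRing R)) :=
  IsFractionRing.injective R (FractionRing R)

lemma mem_idealImage {J : Ideal R} {z : FractionRing R} :
    z ∈ idealImage J ↔ ∃ c ∈ J, algebraMap R (FractionRing R) c = z := by
  simp [idealImage, Submodule.mem_map, Algebra.linearMap_apply]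

lemma mem_one_sub {z : FractionRing R} :
    z ∈ (1 : Submodule R (FractionRing R)) ↔ ∃ c : R, algebraMap R (FractionRing R) c = z :=
  Submodule.mem_one

lemma le_one_div_one_div (S : Submodule R (FractionRing R)) : S ≤ 1 / (1 / S) := by
  intro x hx
  rw [Submodule.mem_div_iff_forall_mul_mem]
  intro y hy
  rw [Submodule.mem_div_iff_forall_mul_mem] at hy
  rw [mul_comm]
  exact hy x hx

lemma one_div_antitone {S T : Submodule R (FractionRing R)} (h : S ≤ T) : 1 / T ≤ 1 / S := by
  intro x hx
  rw [Submodule.mem_div_iff_forall_mul_mem] at hx ⊢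
  exact fun y hy => hx y (h hy)

lemma one_div_one_div_one_div (S : Submodule R (FractionRing R)) :
    1 / (1 / (1 / S)) = 1 / S :=
  le_antisymm (one_div_antitone (le_one_div_one_div S)) (le_one_div_one_div (1 / S))

lemma isDivisorial_of_eq_one_div {J : Ideal R} (hJ : J ≠ ⊥)
    (H : Submodule R (FractionRing R)) (h : idealImage J = 1 / H) : IsDivisorial J :=
  ⟨hJ, by rw [h, one_div_one_div_one_div]⟩

lemma isDivisorial_span_singleton {x : R} (hx : x ≠ 0) : IsDivisorial (Ideal.span {x}) := by
  set f := algebraMap R (FractionRing R)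
  have hfx : f x ≠ 0 := fun h => hx (finj (by rw [h, map_zero]))
  refine ⟨by simpa using hx, le_antisymm (le_one_div_one_div _) ?_⟩
  intro z hz
  rw [Submodule.mem_div_iff_forall_mul_mem] at hz
  have hu : (f x)⁻¹ ∈ 1 / idealImage (Ideal.span {x}) := by
    rw [Submodule.mem_div_iff_forall_mul_mem]
    intro y hy
    obtain ⟨c, hc, rfl⟩ := mem_idealImage.mp hy
    obtain ⟨d, rfl⟩ := Ideal.mem_span_singleton'.mp hc
    rw [mem_one_sub]
    exact ⟨d, by field_simp [f]; exact (map_mul _ _ _).symm⟩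
  have h1 := hz _ hu
  obtain ⟨c, hc⟩ := mem_one_sub.mp h1
  rw [mem_idealImage]
  refine ⟨c * x, Ideal.mul_mem_left _ _ (Ideal.mem_span_singleton_self x), ?_⟩
  rw [map_mul, hc]
  field_simp
  rfl

lemma isDivisorial_colon {J : Ideal R} (hJ : IsDivisorial J) (I : Ideal R)
    (hne : J.colon I ≠ ⊥) : IsDivisorial (J.colon I) := by
  set f := algebraMap R (FractionRing R)
  refine isDivisorial_of_eq_one_div hne (idealImage I * (1 / idealImage J) ⊔ 1) ?_
  apply le_antisymm
  · intro z hz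
    obtain ⟨c, hc, rfl⟩ := mem_idealImage.mp hz
    rw [Submodule.mem_div_iff_forall_mul_mem]
    intro w hw
    obtain ⟨w₁, hw₁, w₂, hw₂, rfl⟩ := Submodule.mem_sup.mp hw
    rw [mul_add]
    apply Submodule.add_mem
    · refine Submodule.mul_induction_on hw₁ ?_ ?_
      · intro y hy b hb
        obtain ⟨i, hi, rfl⟩ := mem_idealImage.mp hy
        rw [Submodule.mem_div_iff_forall_mul_mem] at hb
        have : f c * (f i * b) = b * f (c * i) := by rw [map_mul]; ring
        rw [this]
        exact hb _ (mem_idealImage.mpr ⟨c * i, (Submodule.mem_colon.mp hc) i hi, rfl⟩)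
      · intro a b ha hb
        rw [mul_add]
        exact Submodule.add_mem _ ha hb
    · obtain ⟨d, rfl⟩ := mem_one_sub.mp hw₂
      exact mem_one_sub.mpr ⟨c * d, by rw [map_mul]⟩
  · intro z hz
    rw [Submodule.mem_div_iff_forall_mul_mem] at hz
    have hz1 : z ∈ (1 : Submodule R (FractionRing R)) := by
      have := hz 1 (Submodule.mem_sup_right (Submodule.one_le.mp le_rfl))
      simpa using this
    obtain ⟨c, rfl⟩ := mem_one_sub.mp hz1
    rw [mem_idealImage]
    refine ⟨c, Submodule.mem_colon.mpr fun i hi => ?_, rfl⟩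
    have hmem : f (c * i) ∈ idealImage J := by
      rw [hJ.2, Submodule.mem_div_iff_forall_mul_mem]
      intro b hb
      have hib : f i * b ∈ idealImage I * (1 / idealImage J) ⊔ 1 :=
        Submodule.mem_sup_left (Submodule.mul_mem_mul (mem_idealImage.mpr ⟨i, hi, rfl⟩) hb)
      have := hz _ hib
      have heq : f c * (f i * b) = f (c * i) * b := by rw [map_mul]; ring
      rwa [heq] at this
    obtain ⟨j, hj, hjeq⟩ := mem_idealImage.mp hmem
    have : j = c * i := finj hjeq
    rw [smul_eq_mul]
    exact this ▸ hj

lemma exists_maximal_divisorial (hMori : IsMoriDomain R) (s : Set (Ideal R))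
    (hdiv : ∀ J ∈ s, IsDivisorial J) (hne : s.Nonempty) :
    ∃ J ∈ s, IsDivisorial J ∧ ∀ J' ∈ s, J ≤ J' → J' = J := by
  have hwf : WellFounded ((· > ·) : {J : Ideal R // IsDivisorial J} →
      {J : Ideal R // IsDivisorial J} → Prop) := by
    refine IsWellFounded.wf (self := (wellFoundedGT_iff_monotone_chain_condition (α := {J : Ideal R // IsDivisorial J})).mpr ?_)
    intro a
    obtain ⟨N, hN⟩ := hMori (fun n => (a n).1) (fun i j hij => a.monotone hij) (fun n => (a n).2)
    exact ⟨N, fun m hm => Subtype.ext (hN m hm).symm⟩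
  set s' : Set {J : Ideal R // IsDivisorial J} := {J | J.1 ∈ s}
  obtain ⟨J₀, hJ₀⟩ := hne
  obtain ⟨m, hm, hmax⟩ := hwf.has_min s' ⟨⟨J₀, hdiv _ hJ₀⟩, hJ₀⟩
  refine ⟨m.1, hm, m.2, fun J' hJ' hle => ?_⟩
  by_contra hne'
  refine hmax ⟨J', hdiv _ hJ'⟩ hJ' ?_
  show m < ⟨J', hdiv _ hJ'⟩
  have : (m : Ideal R) < ((⟨J', hdiv _ hJ'⟩ : {J : Ideal R // IsDivisorial J}) : Ideal R) :=
    lt_of_le_of_ne hle fun h => hne' h.symm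
  exact Subtype.coe_lt_coe.mp this

lemma isMaximal_of_prime_of_dim_one (hdim : ringKrullDim R = 1) {P : Ideal R}
    (hP : P.IsPrime) (hP0 : P ≠ ⊥) : P.IsMaximal := by
  by_contra hnm
  obtain ⟨M, hM, hPM⟩ := Ideal.exists_le_maximal P hP.ne_top
  have hPMne : P ≠ M := fun h => hnm (h ▸ hM)
  have hlt1 : (⟨⊥, Ideal.bot_prime⟩ : PrimeSpectrum R) < ⟨P, hP⟩ := by
    refine lt_of_le_of_ne bot_le ?_
    intro h
    exact hP0 (congrArg PrimeSpectrum.asIdeal h).symm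
  have hlt2 : (⟨P, hP⟩ : PrimeSpectrum R) < ⟨M, hM.isPrime⟩ := by
    refine lt_of_le_of_ne hPM ?_
    intro h
    exact hPMne (congrArg PrimeSpectrum.asIdeal h)
  set p : LTSeries (PrimeSpectrum R) :=
    ⟨2, ![⟨⊥, Ideal.bot_prime⟩, ⟨P, hP⟩, ⟨M, hM.isPrime⟩], by
      intro i
      fin_cases i
      · exact hlt1
      · exact hlt2⟩
  have := Order.LTSeries.length_le_krullDim p
  rw [← ringKrullDim, hdim] at this
  norm_num [p] at this
end Aux

/-- A one-dimensional Mori domain has finite character. -/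
theorem stmt_18 {R : Type*} [CommRing R] [IsDomain R]
    (hMori : IsMoriDomain R) (hdim : ringKrullDim R = 1) :
    ∀ r : R, r ≠ 0 → {M : Ideal R | M.IsMaximal ∧ r ∈ M}.Finite := by
  intro r hr
  by_contra hfin
  have hinf : {M : Ideal R | M.IsMaximal ∧ r ∈ M}.Infinite := hfin
  set Sig : Set (Ideal R) :=
    {J | IsDivisorial J ∧ r ∈ J ∧ {M : Ideal R | M.IsMaximal ∧ J ≤ M}.Infinite} with hSig
  have hspan : Ideal.span {r} ∈ Sig := by
    refine ⟨isDivisorial_span_singleton hr, Ideal.mem_span_singleton_self r, ?_⟩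
    have heq : {M : Ideal R | M.IsMaximal ∧ Ideal.span {r} ≤ M} =
        {M : Ideal R | M.IsMaximal ∧ r ∈ M} := by
      ext M
      simp [Ideal.span_singleton_le_iff_mem]
    rw [heq]
    exact hinf
  obtain ⟨J, hJs, hJdiv, hJmax⟩ :=
    exists_maximal_divisorial hMori Sig (fun J h => h.1) ⟨_, hspan⟩
  obtain ⟨-, hrJ, hJinf⟩ := hJs
  have hJtop : J ≠ ⊤ := by
    obtain ⟨M, hMmax, hJM⟩ := hJinf.nonempty
    exact fun h => hMmax.ne_top (top_le_iff.mp (h ▸ hJM))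
  have hlecolon : ∀ I : Ideal R, J ≤ J.colon I := by
    intro I z hz
    refine Submodule.mem_colon.mpr fun i hi => ?_
    rw [smul_eq_mul]
    exact Ideal.mul_mem_right _ _ hz
  have hcolon_ne_bot : ∀ I : Ideal R, J.colon I ≠ ⊥ := by
    intro I h
    have : r ∈ (⊥ : Ideal R) := h ▸ hlecolon I hrJ
    exact hr ((Submodule.mem_bot R).mp this)
  set F : Set (Ideal R) := {I | ∃ y, y ∉ J ∧ I = J.colon (Ideal.span {y})} with hF
  have hFdiv : ∀ I ∈ F, IsDivisorial I := by
    rintro I ⟨y, hy, rfl⟩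
    exact isDivisorial_colon hJdiv _ (hcolon_ne_bot _)
  have h1J : (1 : R) ∉ J := (Ideal.ne_top_iff_one J).mp hJtop
  obtain ⟨P, hPF, hPdiv, hPmax'⟩ := exists_maximal_divisorial hMori F hFdiv
    ⟨_, 1, h1J, rfl⟩
  obtain ⟨y, hyJ, hPeq⟩ := hPF
  have hJleP : J ≤ P := hPeq ▸ hlecolon _
  have hPprime : P.IsPrime := by
    constructor
    · intro h
      have h1 : (1 : R) ∈ P := h ▸ Submodule.mem_top
      rw [hPeq, Ideal.mem_colon_span_singleton, one_mul] at h1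
      exact hyJ h1
    · intro a b hab
      by_contra hab'
      push_neg at hab'
      obtain ⟨haP, hbP⟩ := hab'
      have hay : a * y ∉ J := fun h => haP (hPeq ▸ Ideal.mem_colon_span_singleton.mpr h)
      have hQF : J.colon (Ideal.span {a * y}) ∈ F := ⟨a * y, hay, rfl⟩
      have hPQ : P ≤ J.colon (Ideal.span {a * y}) := by
        intro z hz
        rw [hPeq, Ideal.mem_colon_span_singleton] at hz
        rw [Ideal.mem_colon_span_singleton, show z * (a * y) = a * (z * y) by ring]
        exact Ideal.mul_mem_left _ _ hz
      have hQP := hPmax' _ hQF hPQ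
      apply hbP
      have haby : a * b * y ∈ J := by
        rw [hPeq] at hab
        exact Ideal.mem_colon_span_singleton.mp hab
      rw [hPeq, Ideal.mem_colon_span_singleton]
      have : b ∈ J.colon (Ideal.span {a * y}) := by
        rw [Ideal.mem_colon_span_singleton, show b * (a * y) = a * b * y by ring]
        exact haby
      rw [hQP, hPeq, Ideal.mem_colon_span_singleton] at this
      exact this
  have hPbot : P ≠ ⊥ := by
    intro h
    exact hr ((Submodule.mem_bot R).mp (h ▸ hJleP hrJ))
  have hPmax : P.IsMaximal := isMaximal_of_prime_of_dim_one hdim hPprime hPbot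
  have hyJ' : y ∈ J.colon P := by
    refine Submodule.mem_colon.mpr fun p hp => ?_
    rw [hPeq, SetLike.mem_coe, Ideal.mem_colon_span_singleton] at hp
    rw [smul_eq_mul, mul_comm]
    exact hp
  have hsub : {M : Ideal R | M.IsMaximal ∧ J ≤ M} \ {P} ⊆
      {M : Ideal R | M.IsMaximal ∧ J.colon P ≤ M} := by
    rintro M ⟨⟨hMmax, hJM⟩, hMP⟩
    have hMP' : M ≠ P := hMP
    have hnle : ¬ P ≤ M := fun hPM => hMP' (hPmax.eq_of_le hMmax.ne_top hPM).symm
    obtain ⟨s, hsP, hsM⟩ := SetLike.not_le_iff_exists.mp hnle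
    refine ⟨hMmax, fun z hz => ?_⟩
    have hzs : z * s ∈ J := by
      have := Submodule.mem_colon.mp hz s hsP
      rwa [smul_eq_mul] at this
    exact (hMmax.isPrime.mem_or_mem (hJM hzs)).resolve_right hsM
  have hJ'Sig : J.colon P ∈ Sig := by
    refine ⟨isDivisorial_colon hJdiv _ (hcolon_ne_bot _), hlecolon P hrJ, ?_⟩
    exact ((hJinf.diff (Set.finite_singleton P)).mono hsub)
  have := hJmax _ hJ'Sig (hlecolon P)
  exact hyJ (this ▸ hyJ')
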